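/- Let τ > 0, ε ≥ 0, 0 ≤ η < 1, speed limits v_min ≤ v_max, acceleration limits a_min < 0 ≤ a_max, and δ1 > −1. Suppose the current safe-distance slack satisfies g ≥ 0, the leader's next-step speed satisfies v₀⁺ ≥ v_min, the follower's speed satisfies v_min ≤ v ≤ v_max, the previous input satisfies u_prev ≤ a_max, and δ1 is large enough that τ(δ1 + 1)·(ε·v_min − a_min − η·(a_max − a_min)) ≥ v_max − v_min with ε·v_min − a_min − η·(a_max − a_min) > 0. Then ā_d = (εv − η·u_prev + (g + τ(v₀⁺ − v))/(τ²(δ1 + 1)))/(1 − η) satisfies ā_d ≥ a_min. -/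
import Mathlib


/-- the safe-distance control bound `ā_d` is at least the
minimum acceleration `a_min` when `δ1` is large enough. -/
theorem a_d_ge_a_min
    (τ ε η vmin vmax amin amax δ1 g v₀' v uprev : ℝ)
    (hτ : 0 < τ) (hε : 0 ≤ ε) (hη0 : 0 ≤ η) (hη1 : η < 1)
    (hv : vmin ≤ vmax) (hamin : amin < 0) (hamax : 0 ≤ amax)
    (hδ1 : -1 < δ1)
    (hg : 0 ≤ g) (hv₀' : vmin ≤ v₀')
    (hvlb : vmin ≤ v) (hvub : v ≤ vmax) (huprev : uprev ≤ amax)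
    (hδ1big : τ * (δ1 + 1) * (ε * vmin - amin - η * (amax - amin)) ≥
      vmax - vmin)
    (hpos : 0 < ε * vmin - amin - η * (amax - amin)) :
    (ε * v - η * uprev + (g + τ * (v₀' - v)) / (τ ^ 2 * (δ1 + 1))) /
      (1 - η) ≥ amin := by
  have hD : 0 < τ ^ 2 * (δ1 + 1) := by nlinarith [sq_nonneg τ, mul_pos (mul_pos hτ hτ) (by linarith : (0:ℝ) < δ1 + 1)]
  have h1 : (g + τ * (v₀' - v)) / (τ ^ 2 * (δ1 + 1)) ≥
      -(ε * vmin - amin - η * (amax - amin)) := by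
    rw [ge_iff_le, le_div_iff₀ hD]
    nlinarith [mul_nonneg hτ.le (by linarith [hδ1big] :
      (0:ℝ) ≤ τ * (δ1 + 1) * (ε * vmin - amin - η * (amax - amin)) - (vmax - vmin)),
      mul_le_mul_of_nonneg_left hvub hτ.le, mul_le_mul_of_nonneg_left hv₀' hτ.le]
  rw [ge_iff_le, le_div_iff₀ (by linarith : (0:ℝ) < 1 - η)]
  have h2 : ε * vmin ≤ ε * v := mul_le_mul_of_nonneg_left hvlb hε
  have h3 : η * uprev ≤ η * amax := mul_le_mul_of_nonneg_left huprev hη0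
  linarith
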